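/- Fix an integer N ≥ 1, a positive integer K, real constants C1 and Csync, and a symmetric matrix J : Fin N → Fin N → ℝ. Let F : ℝ → ℝ be differentiable and even, set S = −F′, and define E(φ) = −(K·C1/2)·Σ_{i} Σ_{j ≠ i} J i j · F(φ i − φ j) − Csync·Σ_i cos(K·φ i) and V i (φ) = −C1·Σ_{j ≠ i} J i j · S(φ i − φ j) − Csync·sin(K·φ i). If φ : ℝ → (Fin N → ℝ) is differentiable and satisfies (φ i)′(t) = V i (φ(t)) for all t and i, then the function t ↦ E(φ(t)) is antitone: for all t₁ ≤ t₂, E(φ(t₂)) ≤ E(φ(t₁)). -/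

import Mathlib

/-- Auxiliary: the symmetry/oddness double-sum swap. -/
lemma swap_sum_aux {N : ℕ} (J : Fin N → Fin N → ℝ) (hJ : ∀ i j, J i j = J j i)
    (f : ℝ → ℝ) (hf : ∀ x, f (-x) = -f x) (ψ D : Fin N → ℝ) :
    ∑ a, ∑ b ∈ Finset.univ.erase a, J a b * (f (ψ a - ψ b) * (D a - D b))
      = 2 * ∑ a, D a * ∑ b ∈ Finset.univ.erase a, J a b * f (ψ a - ψ b) := by
  have hswap :
      ∑ a, ∑ b ∈ Finset.univ.erase a, J a b * f (ψ a - ψ b) * D b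
        = ∑ a, ∑ b ∈ Finset.univ.erase a, J b a * f (ψ b - ψ a) * D a := by
    have h1 : ∀ (g : Fin N → Fin N → ℝ),
        ∑ a, ∑ b ∈ Finset.univ.erase a, g a b
          = ∑ a, ∑ b, if b ≠ a then g a b else 0 := by
      intro g
      refine Finset.sum_congr rfl fun a _ => ?_
      rw [← Finset.filter_ne' Finset.univ a, Finset.sum_filter]
    rw [h1, h1, Finset.sum_comm]
    refine Finset.sum_congr rfl fun a _ => Finset.sum_congr rfl fun b _ => ?_
    simp [ne_comm]
  have hneg : ∀ a b, J b a * f (ψ b - ψ a) = -(J a b * f (ψ a - ψ b)) := by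
    intro a b
    rw [hJ b a, show ψ b - ψ a = -(ψ a - ψ b) by ring, hf]
    ring
  have expand : ∀ a b, J a b * (f (ψ a - ψ b) * (D a - D b))
      = J a b * f (ψ a - ψ b) * D a - J a b * f (ψ a - ψ b) * D b := by
    intro a b; ring
  simp only [expand, Finset.sum_sub_distrib]
  rw [hswap]
  have h2 : ∑ a, ∑ b ∈ Finset.univ.erase a, J b a * f (ψ b - ψ a) * D a
      = -∑ a, ∑ b ∈ Finset.univ.erase a, J a b * f (ψ a - ψ b) * D a := by
    rw [← Finset.sum_neg_distrib]
    refine Finset.sum_congr rfl fun a _ => ?_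
    rw [← Finset.sum_neg_distrib]
    refine Finset.sum_congr rfl fun b _ => ?_
    rw [hneg a b]; ring
  rw [h2, sub_neg_eq_add, ← two_mul]
  congr 1
  refine Finset.sum_congr rfl fun a _ => ?_
  rw [Finset.mul_sum]
  exact Finset.sum_congr rfl fun b _ => by ring

/-- along any trajectory of the oscillator dynamics, the energy
`t ↦ E(φ(t))` is antitone (nonincreasing). -/
theorem stmt_2 (N : ℕ) (hN : 1 ≤ N) (K : ℕ) (hK : 0 < K) (C1 Csync : ℝ)
    (J : Fin N → Fin N → ℝ) (hJ : ∀ i j, J i j = J j i)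
    (F : ℝ → ℝ) (hF : Differentiable ℝ F) (hFeven : ∀ x, F (-x) = F x)
    (S : ℝ → ℝ) (hS : ∀ x, S x = -(deriv F x))
    (E : (Fin N → ℝ) → ℝ)
    (hE : ∀ φ : Fin N → ℝ, E φ =
      -((K : ℝ) * C1 / 2) * ∑ a, ∑ b ∈ Finset.univ.erase a, J a b * F (φ a - φ b)
        - Csync * ∑ a, Real.cos ((K : ℝ) * φ a))
    (V : Fin N → (Fin N → ℝ) → ℝ)
    (hV : ∀ (i : Fin N) (ψ : Fin N → ℝ), V i ψ =
      -C1 * ∑ j ∈ Finset.univ.erase i, J i j * S (ψ i - ψ j)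
        - Csync * Real.sin ((K : ℝ) * ψ i))
    (φ : ℝ → Fin N → ℝ) (hφ : Differentiable ℝ φ)
    (hdyn : ∀ (t : ℝ) (i : Fin N), deriv (fun s => φ s i) t = V i (φ t)) :
    Antitone (fun t => E (φ t)) := by
  -- oddness of deriv F
  have hFodd : ∀ x, deriv F (-x) = -deriv F x := by
    intro x
    have h1 : (fun y => F (-y)) = F := funext hFeven
    have h2 : HasDerivAt (fun y => F (-y)) (deriv F (-x) * (-1)) x :=
      (hF (-x)).hasDerivAt.comp x (hasDerivAt_neg x)
    have h3 : HasDerivAt F (deriv F x) x := (hF x).hasDerivAt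
    rw [h1] at h2
    have := h2.unique h3
    linarith
  -- the main derivative computation
  have key : ∀ t : ℝ, HasDerivAt (fun s => E (φ s))
      (-(K : ℝ) * ∑ a, (V a (φ t)) ^ 2) t := by
    intro t
    set ψ : Fin N → ℝ := φ t with hψ
    set D : Fin N → ℝ := fun a => V a (φ t) with hDdef
    have hφa : ∀ a : Fin N, HasDerivAt (fun s => φ s a) (D a) t := by
      intro a
      have hda : DifferentiableAt ℝ (fun s => φ s a) t :=
        (differentiable_pi.mp hφ a) t
      have := hda.hasDerivAt
      rwa [hdyn t a] at this
    have hraw : HasDerivAt (fun s => E (φ s))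
        (-((K : ℝ) * C1 / 2) *
            ∑ a, ∑ b ∈ Finset.univ.erase a,
              J a b * (deriv F (ψ a - ψ b) * (D a - D b))
          - Csync * ∑ a, (-Real.sin ((K : ℝ) * ψ a) * ((K : ℝ) * D a))) t := by
      have hterm : ∀ (a b : Fin N), HasDerivAt (fun s => J a b * F (φ s a - φ s b))
          (J a b * (deriv F (ψ a - ψ b) * (D a - D b))) t := by
        intro a b
        exact (((hF (ψ a - ψ b)).hasDerivAt.comp t
          ((hφa a).sub (hφa b)))).const_mul (J a b)
      have hcos : ∀ a : Fin N, HasDerivAt (fun s => Real.cos ((K : ℝ) * φ s a))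
          (-Real.sin ((K : ℝ) * ψ a) * ((K : ℝ) * D a)) t := by
        intro a
        exact (Real.hasDerivAt_cos ((K : ℝ) * ψ a)).comp t ((hφa a).const_mul (K : ℝ))
      have h1 : HasDerivAt
          (fun s => -((K : ℝ) * C1 / 2) *
              ∑ a, ∑ b ∈ Finset.univ.erase a, J a b * F (φ s a - φ s b)
            - Csync * ∑ a, Real.cos ((K : ℝ) * φ s a))
          (-((K : ℝ) * C1 / 2) *
              ∑ a, ∑ b ∈ Finset.univ.erase a,
                J a b * (deriv F (ψ a - ψ b) * (D a - D b))
            - Csync * ∑ a, (-Real.sin ((K : ℝ) * ψ a) * ((K : ℝ) * D a))) t := by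
        exact ((HasDerivAt.fun_sum (fun a _ => HasDerivAt.fun_sum
            (fun b _ => hterm a b))).const_mul _).sub
          ((HasDerivAt.fun_sum (fun a _ => hcos a)).const_mul _)
      simpa only [← hE] using h1
    convert hraw using 1
    -- algebra
    rw [swap_sum_aux J hJ (deriv F) hFodd ψ D]
    set Sa : Fin N → ℝ :=
      fun a => ∑ b ∈ Finset.univ.erase a, J a b * deriv F (ψ a - ψ b) with hSa
    have hD : ∀ a : Fin N, D a =
        C1 * Sa a - Csync * Real.sin ((K : ℝ) * ψ a) := by
      intro a
      have h3 : ∑ b ∈ Finset.univ.erase a, J a b * S (ψ a - ψ b)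
          = -Sa a := by
        rw [hSa, ← Finset.sum_neg_distrib]
        exact Finset.sum_congr rfl fun b _ => by rw [hS]; ring
      rw [hDdef]
      show V a (φ t) = _
      rw [hV, ← hψ, h3]
      ring
    rw [show (∑ a, (V a ψ) ^ 2) = ∑ a, (D a) ^ 2 from rfl]
    rw [Finset.mul_sum, Finset.mul_sum, Finset.mul_sum, Finset.mul_sum,
      ← Finset.sum_sub_distrib]
    refine Finset.sum_congr rfl fun a _ => ?_
    rw [hD a]
    ring
  -- conclude
  refine antitone_of_deriv_nonpos (fun t => (key t).differentiableAt) (fun t => ?_)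
  rw [(key t).deriv]
  have h1 : (0 : ℝ) ≤ ∑ a, (V a (φ t)) ^ 2 :=
    Finset.sum_nonneg fun a _ => sq_nonneg _
  have h2 : (0 : ℝ) ≤ (K : ℝ) := Nat.cast_nonneg K
  nlinarith
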